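/- Let n₁, n₂, n₃ be pairwise orthogonal unit vectors in ℝ³ and η ∈ [0,1]. The three noisy spin-1/2 observables M₁, M₂, M₃ with effects E^k_± = (1/2)(I ± η σ·n_k) are (triplewise) jointly measurable if and only if η ≤ 1/√3. -/

import Mathlib

open Matrix ComplexOrder

noncomputable section

abbrev Mat2 := Matrix (Fin 2) (Fin 2) ℂ

/-- Pauli matrix σ₁. -/
def σ1 : Mat2 := !![0, 1; 1, 0]
/-- Pauli matrix σ₂. -/
def σ2 : Mat2 := !![0, -Complex.I; Complex.I, 0]
/-- Pauli matrix σ₃. -/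
def σ3 : Mat2 := !![1, 0; 0, -1]

/-- σ·a for a real 3-vector a. -/
def pauli (a : Fin 3 → ℝ) : Mat2 := (a 0 : ℂ) • σ1 + (a 1 : ℂ) • σ2 + (a 2 : ℂ) • σ3

/-- Euclidean inner product on ℝ³. -/
def dot3 (a b : Fin 3 → ℝ) : ℝ := a 0 * b 0 + a 1 * b 1 + a 2 * b 2

/-- Euclidean norm on ℝ³. -/
def norm3 (a : Fin 3 → ℝ) : ℝ := Real.sqrt (dot3 a a)

/-- A qubit effect: both `E` and `I - E` positive semidefinite. -/
def IsEffect (E : Mat2) : Prop := E.PosSemidef ∧ (1 - E).PosSemidef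

/-- A qubit density matrix. -/
def IsDensity (ρ : Mat2) : Prop := ρ.PosSemidef ∧ ρ.trace = 1

/-- E₊ = (1/2)(I + η σ·n). -/
def Epos (η : ℝ) (n : Fin 3 → ℝ) : Mat2 := (1/2 : ℂ) • (1 + (η : ℂ) • pauli n)
/-- E₋ = (1/2)(I - η σ·n). -/
def Eneg (η : ℝ) (n : Fin 3 → ℝ) : Mat2 := (1/2 : ℂ) • (1 - (η : ℂ) • pauli n)

/-- A pairwise joint measurement of the noisy spin-1/2 observables along nᵢ and nⱼ. -/
def IsJointMmt (η : ℝ) (ni nj : Fin 3 → ℝ) (Gpp Gpm Gmp Gmm : Mat2) : Prop :=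
  IsEffect Gpp ∧ IsEffect Gpm ∧ IsEffect Gmp ∧ IsEffect Gmm ∧
  Gpp + Gpm = Epos η ni ∧ Gmp + Gmm = Eneg η ni ∧
  Gpp + Gmp = Epos η nj ∧ Gpm + Gmm = Eneg η nj

/-- Average anticorrelation probability R₃(ρ), given the anticorrelation effects of the
three pairwise joint measurements. -/
def R3 (ρ G12pm G12mp G13pm G13mp G23pm G23mp : Mat2) : ℝ :=
  (1/3) * ((ρ * (G12pm + G12mp)).trace.re + (ρ * (G13pm + G13mp)).trace.re +
    (ρ * (G23pm + G23mp)).trace.re)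

/-- Parametric joint-measurement family. -/
def Gpp (η : ℝ) (ni nj : Fin 3 → ℝ) (α : ℝ) (a : Fin 3 → ℝ) : Mat2 :=
  (1/2 : ℂ) • (((α/2 : ℝ) : ℂ) • (1 : Mat2) + pauli ((1/2 : ℝ) • (η • (ni + nj) - a)))
def Gpm (η : ℝ) (ni nj : Fin 3 → ℝ) (α : ℝ) (a : Fin 3 → ℝ) : Mat2 :=
  (1/2 : ℂ) • (((1 - α/2 : ℝ) : ℂ) • (1 : Mat2) + pauli ((1/2 : ℝ) • (η • (ni - nj) + a)))
def Gmp (η : ℝ) (ni nj : Fin 3 → ℝ) (α : ℝ) (a : Fin 3 → ℝ) : Mat2 :=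
  (1/2 : ℂ) • (((1 - α/2 : ℝ) : ℂ) • (1 : Mat2) + pauli ((1/2 : ℝ) • (-(η • ni) + η • nj + a)))
def Gmm (η : ℝ) (ni nj : Fin 3 → ℝ) (α : ℝ) (a : Fin 3 → ℝ) : Mat2 :=
  (1/2 : ℂ) • (((α/2 : ℝ) : ℂ) • (1 : Mat2) + pauli ((1/2 : ℝ) • (-(η • (ni + nj)) - a)))

/-- Trine directions in the ZX plane. -/
def tn1 : Fin 3 → ℝ := ![0, 0, 1]
def tn2 : Fin 3 → ℝ := ![Real.sqrt 3 / 2, 0, -(1/2)]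
def tn3 : Fin 3 → ℝ := ![-(Real.sqrt 3 / 2), 0, -(1/2)]

/-- sign of a Boolean, as ±1. -/
def sgn (b : Bool) : ℝ := if b then 1 else -1

/-- m_X = Σₖ Xₖ nₖ. -/
def mvec {N : ℕ} (n : Fin N → Fin 3 → ℝ) (X : Fin N → Bool) : Fin 3 → ℝ :=
  ∑ k, sgn (X k) • n k

/-- Joint measurability of the N noisy qubit observables. -/
def JointlyMeasurable {N : ℕ} (η : ℝ) (n : Fin N → Fin 3 → ℝ) : Prop :=
  ∃ E : (Fin N → Bool) → Mat2,
    (∀ X, IsEffect (E X)) ∧ (∑ X, E X) = 1 ∧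
    (∀ k, ∑ X ∈ Finset.univ.filter (fun X => X k = true), E X = Epos η (n k)) ∧
    (∀ k, ∑ X ∈ Finset.univ.filter (fun X => X k = false), E X = Eneg η (n k))



-- ===== auxiliary lemmas =====
set_option maxHeartbeats 1000000

lemma pauli_apply' (a : Fin 3 → ℝ) : pauli a =
    !![(a 2 : ℂ), (a 0 : ℂ) - (a 1 : ℂ)*Complex.I; (a 0:ℂ) + (a 1:ℂ)*Complex.I, -(a 2:ℂ)] := by
  unfold pauli σ1 σ2 σ3
  ext i j
  fin_cases i <;> fin_cases j <;> (simp; try ring)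

lemma pauli_add' (a b : Fin 3 → ℝ) : pauli (a + b) = pauli a + pauli b := by
  simp only [pauli, Pi.add_apply, Complex.ofReal_add]; module

lemma pauli_smul' (c : ℝ) (a : Fin 3 → ℝ) : pauli (c • a) = (c:ℂ) • pauli a := by
  simp only [pauli, Pi.smul_apply, smul_eq_mul, Complex.ofReal_mul]; module

lemma cs3 (a b : Fin 3 → ℝ) : dot3 a b ^ 2 ≤ dot3 a a * dot3 b b := by
  simp only [dot3]
  nlinarith [sq_nonneg (a 0*b 1 - a 1*b 0), sq_nonneg (a 0*b 2 - a 2*b 0),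
    sq_nonneg (a 1*b 2 - a 2*b 1)]

lemma dot3_nonneg (a : Fin 3 → ℝ) : 0 ≤ dot3 a a := by
  simp only [dot3]; nlinarith [sq_nonneg (a 0), sq_nonneg (a 1), sq_nonneg (a 2)]

lemma dot3_smul_self (c : ℝ) (a : Fin 3 → ℝ) : dot3 (c • a) (c • a) = c^2 * dot3 a a := by
  simp only [dot3, Pi.smul_apply, smul_eq_mul]; ring

set_option maxHeartbeats 2000000 in
lemma key_psd (α : ℝ) (a : Fin 3 → ℝ) (hα : 0 ≤ α) (h : dot3 a a ≤ α^2) :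
    ((α:ℂ) • (1:Mat2) + pauli a).PosSemidef := by
  have hM : (α:ℂ) • (1:Mat2) + pauli a =
      !![(α + a 2 : ℂ), (a 0 : ℂ) - (a 1 : ℂ)*Complex.I;
         (a 0:ℂ) + (a 1:ℂ)*Complex.I, (α:ℂ) - (a 2:ℂ)] := by
    rw [pauli_apply']
    ext i j
    fin_cases i <;> fin_cases j <;> (simp [Matrix.one_apply]; try ring)
  rw [hM]
  rw [posSemidef_iff_dotProduct_mulVec]
  constructor
  · ext i j
    fin_cases i <;> fin_cases j <;>
      simp [Matrix.conjTranspose_apply, Complex.ext_iff]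
  · intro x
    have hd : star x ⬝ᵥ (!![(α + a 2 : ℂ), (a 0 : ℂ) - (a 1 : ℂ)*Complex.I;
         (a 0:ℂ) + (a 1:ℂ)*Complex.I, (α:ℂ) - (a 2:ℂ)] *ᵥ x) =
        (starRingEnd ℂ) (x 0) * (((α:ℂ) + a 2) * x 0 + ((a 0:ℂ) - (a 1:ℂ)*Complex.I) * x 1) +
        (starRingEnd ℂ) (x 1) * (((a 0:ℂ) + (a 1:ℂ)*Complex.I) * x 0 + ((α:ℂ) - (a 2:ℂ)) * x 1) := by
      simp [dotProduct, mulVec, Fin.sum_univ_two, mul_comm]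
    rw [hd, Complex.le_def]
    set p := (x 0).re; set q := (x 0).im; set r := (x 1).re; set s := (x 1).im
    constructor
    · simp only [Complex.add_re, Complex.mul_re, Complex.mul_im, Complex.add_im,
        Complex.sub_re, Complex.sub_im, Complex.I_re, Complex.I_im, Complex.ofReal_re,
        Complex.ofReal_im, Complex.conj_re, Complex.conj_im, Complex.zero_re]
      have ha2 : a 0^2 + a 1^2 + a 2^2 ≤ α^2 := by simp only [dot3] at h; nlinarith [h]
      have hw : (2*(p*r+q*s))^2 + (2*(p*s-q*r))^2 + (p^2+q^2-r^2-s^2)^2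
          = (p^2+q^2+r^2+s^2)^2 := by ring
      have hcs : (a 0*(2*(p*r+q*s)) + a 1*(2*(p*s-q*r)) + a 2*(p^2+q^2-r^2-s^2))^2
          ≤ (a 0^2 + a 1^2 + a 2^2) *
            ((2*(p*r+q*s))^2 + (2*(p*s-q*r))^2 + (p^2+q^2-r^2-s^2)^2) := by
        nlinarith [sq_nonneg (a 0*(2*(p*s-q*r)) - a 1*(2*(p*r+q*s))),
          sq_nonneg (a 0*(p^2+q^2-r^2-s^2) - a 2*(2*(p*r+q*s))),
          sq_nonneg (a 1*(p^2+q^2-r^2-s^2) - a 2*(2*(p*s-q*r)))]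
      rw [hw] at hcs
      have h2 : (a 0^2 + a 1^2 + a 2^2) * ((p^2+q^2+r^2+s^2)^2)
          ≤ α^2 * ((p^2+q^2+r^2+s^2)^2) :=
        mul_le_mul_of_nonneg_right ha2 (sq_nonneg _)
      have hsq : (a 0*(2*(p*r+q*s)) + a 1*(2*(p*s-q*r)) + a 2*(p^2+q^2-r^2-s^2))^2
          ≤ (α*(p^2+q^2+r^2+s^2))^2 := by
        have hth : (α*(p^2+q^2+r^2+s^2))^2 = α^2 * ((p^2+q^2+r^2+s^2)^2) := by ring
        linarith [hcs, h2, hth.ge, hth.le]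
      have key := (abs_le_of_sq_le_sq' hsq (mul_nonneg hα (by positivity))).1
      nlinarith [key]
    · simp only [Complex.add_im, Complex.mul_re, Complex.mul_im, Complex.add_re,
        Complex.sub_re, Complex.sub_im, Complex.I_re, Complex.I_im, Complex.ofReal_re,
        Complex.ofReal_im, Complex.conj_re, Complex.conj_im, Complex.zero_im]
      ring

lemma psd_diag (A : Mat2) (h : A.PosSemidef) (i : Fin 2) : 0 ≤ (A i i).re ∧ (A i i).im = 0 := by
  have h2 := h.dotProduct_mulVec_nonneg (Pi.single i 1)
  have hd : star (Pi.single i (1:ℂ)) ⬝ᵥ (A *ᵥ Pi.single i 1) = A i i := by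
    fin_cases i <;> simp [dotProduct, mulVec, Fin.sum_univ_two, Pi.single_apply]
  rw [hd, Complex.le_def] at h2
  simpa using ⟨h2.1, h2.2.symm⟩

lemma psd_herm (A : Mat2) (h : A.PosSemidef) : A 1 0 = starRingEnd ℂ (A 0 1) := by
  have h2 := congrFun (congrFun h.1 1) 0
  simpa [Matrix.conjTranspose_apply] using h2.symm

lemma psd_det (A : Mat2) (h : A.PosSemidef) :
    (A 0 1).re^2 + (A 0 1).im^2 ≤ (A 0 0).re * (A 1 1).re := by
  have hdet : 0 ≤ A.det := by
    rw [h.1.det_eq_prod_eigenvalues]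
    apply Finset.prod_nonneg
    intro i _
    exact Complex.zero_le_real.mpr (h.eigenvalues_nonneg i)
  rw [Matrix.det_fin_two, Complex.le_def] at hdet
  have h10 := psd_herm A h
  have h00 := psd_diag A h 0
  have h11 := psd_diag A h 1
  rw [h10] at hdet
  simp only [Complex.sub_re, Complex.mul_re, Complex.conj_re, Complex.conj_im,
    Complex.zero_re, Complex.zero_im] at hdet
  nlinarith [hdet.1, h00.2, h11.2]

def e3 : Bool × Bool × Bool ≃ (Fin 3 → Bool) where
  toFun x := ![x.1, x.2.1, x.2.2]
  invFun X := (X 0, X 1, X 2)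
  left_inv := by rintro ⟨a,b,c⟩; simp
  right_inv := by intro X; funext i; fin_cases i <;> simp

lemma sum_pi3 {M : Type*} [AddCommMonoid M] (f : (Fin 3 → Bool) → M) :
    ∑ X : Fin 3 → Bool, f X =
      f ![true,true,true] + f ![true,true,false] + f ![true,false,true] + f ![true,false,false] +
      f ![false,true,true] + f ![false,true,false] + f ![false,false,true] + f ![false,false,false] := by
  rw [← Equiv.sum_comp e3 f]
  simp only [Fintype.sum_prod_type, Fintype.sum_bool, e3, Equiv.coe_fn_mk]
  abel

lemma pauli_mvec (n₁ n₂ n₃ : Fin 3 → ℝ) (X : Fin 3 → Bool) :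
    pauli (mvec ![n₁, n₂, n₃] X) =
      ((sgn (X 0) : ℝ):ℂ) • pauli n₁ + ((sgn (X 1) : ℝ):ℂ) • pauli n₂ +
      ((sgn (X 2) : ℝ):ℂ) • pauli n₃ := by
  simp only [mvec, Fin.sum_univ_three, Matrix.cons_val_zero, Matrix.cons_val_one,
    Matrix.head_cons, Matrix.cons_val_two, Matrix.tail_cons]
  rw [pauli_add', pauli_add', pauli_smul', pauli_smul', pauli_smul']


/-- For three pairwise orthogonal unit vectors, the noisy spin-1/2 observables are
triplewise jointly measurable iff η ≤ 1/√3. -/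
theorem orthogonal_jm_iff (n₁ n₂ n₃ : Fin 3 → ℝ)
    (h1 : norm3 n₁ = 1) (h2 : norm3 n₂ = 1) (h3 : norm3 n₃ = 1)
    (h12 : dot3 n₁ n₂ = 0) (h13 : dot3 n₁ n₃ = 0) (h23 : dot3 n₂ n₃ = 0)
    (η : ℝ) (hη : η ∈ Set.Icc (0 : ℝ) 1) :
    JointlyMeasurable η ![n₁, n₂, n₃] ↔ η ≤ 1 / Real.sqrt 3 := by
  obtain ⟨hη0, hη1⟩ := hη
  have h3pos : (0:ℝ) < Real.sqrt 3 := Real.sqrt_pos.mpr (by norm_num)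
  have h3sq : Real.sqrt 3 ^ 2 = 3 := Real.sq_sqrt (by norm_num)
  have hd1 : dot3 n₁ n₁ = 1 := by
    rw [← Real.sq_sqrt (dot3_nonneg n₁)]; rw [norm3] at h1; rw [h1]; norm_num
  have hd2 : dot3 n₂ n₂ = 1 := by
    rw [← Real.sq_sqrt (dot3_nonneg n₂)]; rw [norm3] at h2; rw [h2]; norm_num
  have hd3 : dot3 n₃ n₃ = 1 := by
    rw [← Real.sq_sqrt (dot3_nonneg n₃)]; rw [norm3] at h3; rw [h3]; norm_num
  have hs2 : ∀ b, sgn b * sgn b = 1 := by intro b; cases b <;> norm_num [sgn]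
  have hmm3 : ∀ X : Fin 3 → Bool,
      dot3 (mvec ![n₁,n₂,n₃] X) (mvec ![n₁,n₂,n₃] X) = 3 := by
    intro X
    have e1 : n₁ 0 * n₁ 0 + n₁ 1 * n₁ 1 + n₁ 2 * n₁ 2 = 1 := hd1
    have e2 : n₂ 0 * n₂ 0 + n₂ 1 * n₂ 1 + n₂ 2 * n₂ 2 = 1 := hd2
    have e3' : n₃ 0 * n₃ 0 + n₃ 1 * n₃ 1 + n₃ 2 * n₃ 2 = 1 := hd3
    have f12 : n₁ 0 * n₂ 0 + n₁ 1 * n₂ 1 + n₁ 2 * n₂ 2 = 0 := h12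
    have f13 : n₁ 0 * n₃ 0 + n₁ 1 * n₃ 1 + n₁ 2 * n₃ 2 = 0 := h13
    have f23 : n₂ 0 * n₃ 0 + n₂ 1 * n₃ 1 + n₂ 2 * n₃ 2 = 0 := h23
    simp only [mvec, Fin.sum_univ_three, Matrix.cons_val_zero, Matrix.cons_val_one,
      Matrix.head_cons, Matrix.cons_val_two, Matrix.tail_cons, dot3, Pi.add_apply,
      Pi.smul_apply, smul_eq_mul]
    linear_combination (sgn (X 0) * sgn (X 0)) * e1 + (sgn (X 1) * sgn (X 1)) * e2 +
      (sgn (X 2) * sgn (X 2)) * e3' + (2 * sgn (X 0) * sgn (X 1)) * f12 +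
      (2 * sgn (X 0) * sgn (X 2)) * f13 + (2 * sgn (X 1) * sgn (X 2)) * f23 +
      hs2 (X 0) + hs2 (X 1) + hs2 (X 2)
  constructor
  · -- necessity
    rintro ⟨E, heff, hsum, hpos, hneg⟩
    set gv : (Fin 3 → Bool) → (Fin 3 → ℝ) :=
      fun X => ![2*(E X 0 1).re, -2*(E X 0 1).im, (E X 0 0).re - (E X 1 1).re] with hgv
    set γ : (Fin 3 → Bool) → ℝ := fun X => (E X 0 0).re + (E X 1 1).re with hγdef
    have hM : ∀ k : Fin 3, ∑ X : Fin 3 → Bool, ((sgn (X k) : ℝ):ℂ) • E X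
        = (η:ℂ) • pauli (![n₁,n₂,n₃] k) := by
      intro k
      have hsplit := Finset.sum_filter_add_sum_filter_not Finset.univ
        (fun X : Fin 3 → Bool => X k = true) (fun X => ((sgn (X k) : ℝ):ℂ) • E X)
      have ha : ∑ X ∈ Finset.univ.filter (fun X : Fin 3 → Bool => X k = true),
          ((sgn (X k) : ℝ):ℂ) • E X = Epos η (![n₁,n₂,n₃] k) := by
        rw [← hpos k]
        apply Finset.sum_congr rfl
        intro X hX
        rw [Finset.mem_filter] at hX
        simp [hX.2, sgn]
      have hb : ∑ X ∈ Finset.univ.filter (fun X : Fin 3 → Bool => ¬ X k = true),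
          ((sgn (X k) : ℝ):ℂ) • E X = - Eneg η (![n₁,n₂,n₃] k) := by
        have hfe : Finset.univ.filter (fun X : Fin 3 → Bool => ¬ X k = true)
            = Finset.univ.filter (fun X : Fin 3 → Bool => X k = false) := by
          apply Finset.filter_congr; intro X _; simp
        rw [hfe, ← hneg k, ← Finset.sum_neg_distrib]
        apply Finset.sum_congr rfl
        intro X hX
        rw [Finset.mem_filter] at hX
        simp [hX.2, sgn]
      rw [ha, hb] at hsplit
      rw [← hsplit]
      simp only [Epos, Eneg]
      module
    have hent : ∀ (k : Fin 3) (i j : Fin 2),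
        (∑ X : Fin 3 → Bool, sgn (X k) * (E X i j).re
          = η * (pauli (![n₁,n₂,n₃] k) i j).re) ∧
        (∑ X : Fin 3 → Bool, sgn (X k) * (E X i j).im
          = η * (pauli (![n₁,n₂,n₃] k) i j).im) := by
      intro k i j
      have hc := congrFun (congrFun (hM k) i) j
      simp only [Matrix.sum_apply, Matrix.smul_apply, smul_eq_mul] at hc
      constructor
      · have hr := congrArg Complex.re hc
        simpa [Complex.re_sum, Complex.re_ofReal_mul] using hr
      · have hi := congrArg Complex.im hc
        simpa [Complex.im_sum, Complex.im_ofReal_mul] using hi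
    have hP : ∀ v : Fin 3 → ℝ, (pauli v 0 0).re = v 2 ∧ (pauli v 0 1).re = v 0 ∧
        (pauli v 0 1).im = -(v 1) ∧ (pauli v 1 1).re = -(v 2) := by
      intro v
      rw [pauli_apply']
      refine ⟨?_, ?_, ?_, ?_⟩ <;> simp
    have hDk : ∀ k : Fin 3, ∑ X : Fin 3 → Bool, sgn (X k) * dot3 (gv X) (![n₁,n₂,n₃] k)
        = 2*η*dot3 (![n₁,n₂,n₃] k) (![n₁,n₂,n₃] k) := by
      intro k
      obtain ⟨hP1, hP2, hP3, hP4⟩ := hP (![n₁,n₂,n₃] k)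
      have e01r := (hent k 0 1).1
      have e01i := (hent k 0 1).2
      have e00 := (hent k 0 0).1
      have e11 := (hent k 1 1).1
      rw [hP2] at e01r
      rw [hP3] at e01i
      rw [hP1] at e00
      rw [hP4] at e11
      have expand : ∀ X : Fin 3 → Bool, sgn (X k) * dot3 (gv X) (![n₁,n₂,n₃] k) =
          (sgn (X k) * (E X 0 1).re) * (2 * (![n₁,n₂,n₃] k 0)) +
          (sgn (X k) * (E X 0 1).im) * (-2 * (![n₁,n₂,n₃] k 1)) +
          (sgn (X k) * (E X 0 0).re) * (![n₁,n₂,n₃] k 2) +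
          (sgn (X k) * (E X 1 1).re) * (-(![n₁,n₂,n₃] k 2)) := by
        intro X
        simp only [hgv, dot3, Matrix.cons_val_zero, Matrix.cons_val_one, Matrix.head_cons,
          Matrix.cons_val_two, Matrix.tail_cons]
        ring
      rw [Finset.sum_congr rfl (fun X _ => expand X)]
      rw [Finset.sum_add_distrib, Finset.sum_add_distrib, Finset.sum_add_distrib,
        ← Finset.sum_mul, ← Finset.sum_mul, ← Finset.sum_mul, ← Finset.sum_mul,
        e01r, e01i, e00, e11]
      simp only [dot3]
      ring
    have hswap : ∑ X : Fin 3 → Bool, dot3 (gv X) (mvec ![n₁,n₂,n₃] X) = 6*η := by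
      have hrow : ∀ X : Fin 3 → Bool, dot3 (gv X) (mvec ![n₁,n₂,n₃] X)
          = ∑ k : Fin 3, sgn (X k) * dot3 (gv X) (![n₁,n₂,n₃] k) := by
        intro X
        simp only [mvec, Fin.sum_univ_three, dot3, Pi.add_apply, Pi.smul_apply, smul_eq_mul]
        ring
      rw [Finset.sum_congr rfl (fun X _ => hrow X), Finset.sum_comm]
      rw [Finset.sum_congr rfl (fun k _ => hDk k), Fin.sum_univ_three]
      simp only [Matrix.cons_val_zero, Matrix.cons_val_one, Matrix.head_cons,
        Matrix.cons_val_two, Matrix.tail_cons, hd1, hd2, hd3]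
      ring
    have hgb : ∀ X : Fin 3 → Bool, dot3 (gv X) (gv X) ≤ γ X ^ 2 ∧ 0 ≤ γ X := by
      intro X
      have hpsd := (heff X).1
      have hdet := psd_det _ hpsd
      have h00 := psd_diag _ hpsd 0
      have h11 := psd_diag _ hpsd 1
      constructor
      · simp only [hgv, hγdef, dot3, Matrix.cons_val_zero, Matrix.cons_val_one,
          Matrix.head_cons, Matrix.cons_val_two, Matrix.tail_cons]
        nlinarith [hdet]
      · simp only [hγdef]
        linarith [h00.1, h11.1]
    have hbd : ∀ X : Fin 3 → Bool, dot3 (gv X) (mvec ![n₁,n₂,n₃] X) ≤ Real.sqrt 3 * γ X := by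
      intro X
      obtain ⟨hgg, hγ0⟩ := hgb X
      have hcs := cs3 (gv X) (mvec ![n₁,n₂,n₃] X)
      rw [hmm3 X] at hcs
      have hsq : dot3 (gv X) (mvec ![n₁,n₂,n₃] X) ^ 2 ≤ (Real.sqrt 3 * γ X)^2 := by
        have hq : (Real.sqrt 3 * γ X)^2 = 3 * γ X^2 := by rw [mul_pow, h3sq]
        nlinarith [hcs, hgg, dot3_nonneg (gv X)]
      exact (abs_le_of_sq_le_sq' hsq (mul_nonneg (Real.sqrt_nonneg 3) hγ0)).2
    have hγsum : ∑ X : Fin 3 → Bool, γ X = 2 := by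
      have c00 := congrFun (congrFun hsum 0) 0
      have c11 := congrFun (congrFun hsum 1) 1
      simp only [Matrix.sum_apply] at c00 c11
      have r00 := congrArg Complex.re c00
      have r11 := congrArg Complex.re c11
      simp only [Complex.re_sum, Matrix.one_apply, if_pos rfl, Complex.one_re] at r00 r11
      simp only [hγdef, Finset.sum_add_distrib]
      rw [r00, r11]
      norm_num
    have hfin : 6*η ≤ Real.sqrt 3 * 2 := by
      calc 6*η = ∑ X : Fin 3 → Bool, dot3 (gv X) (mvec ![n₁,n₂,n₃] X) := hswap.symm
        _ ≤ ∑ X : Fin 3 → Bool, Real.sqrt 3 * γ X := Finset.sum_le_sum (fun X _ => hbd X)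
        _ = Real.sqrt 3 * ∑ X : Fin 3 → Bool, γ X := by rw [Finset.mul_sum]
        _ = Real.sqrt 3 * 2 := by rw [hγsum]
    rw [le_div_iff₀ h3pos]
    have hmul := mul_le_mul_of_nonneg_right hfin (Real.sqrt_nonneg 3)
    nlinarith [hmul, h3sq]
  · -- sufficiency
    intro hle
    have hle' : η * Real.sqrt 3 ≤ 1 := by
      rw [le_div_iff₀ h3pos] at hle; exact hle
    have hη23 : η^2 * 3 ≤ 1 := by nlinarith [hle', Real.sqrt_nonneg 3]
    refine ⟨fun X => (1/8 : ℂ) • ((1:Mat2) + (η:ℂ) • pauli (mvec ![n₁,n₂,n₃] X)), ?_, ?_, ?_, ?_⟩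
    · intro X
      beta_reduce
      have hdm : dot3 ((η/8) • mvec ![n₁,n₂,n₃] X) ((η/8) • mvec ![n₁,n₂,n₃] X)
          = (η/8)^2 * 3 := by rw [dot3_smul_self, hmm3]
      have hdm' : dot3 ((-(η/8)) • mvec ![n₁,n₂,n₃] X) ((-(η/8)) • mvec ![n₁,n₂,n₃] X)
          = (η/8)^2 * 3 := by rw [dot3_smul_self, hmm3]; ring
      constructor
      · have hrw : (1/8:ℂ) • ((1:Mat2) + (η:ℂ) • pauli (mvec ![n₁,n₂,n₃] X)) =
            (((1/8:ℝ)):ℂ) • (1:Mat2) + pauli ((η/8) • mvec ![n₁,n₂,n₃] X) := by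
          rw [pauli_smul']; push_cast; module
        rw [hrw]
        exact key_psd _ _ (by norm_num) (by rw [hdm]; nlinarith [hη23])
      · have hrw : (1:Mat2) - (1/8:ℂ) • ((1:Mat2) + (η:ℂ) • pauli (mvec ![n₁,n₂,n₃] X)) =
            (((7/8:ℝ)):ℂ) • (1:Mat2) + pauli ((-(η/8)) • mvec ![n₁,n₂,n₃] X) := by
          rw [pauli_smul']; push_cast; module
        rw [hrw]
        exact key_psd _ _ (by norm_num) (by rw [hdm']; nlinarith [hη23])
    · rw [sum_pi3]
      beta_reduce
      simp only [pauli_mvec, Matrix.cons_val_zero, Matrix.cons_val_one, Matrix.head_cons,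
        Matrix.cons_val_two, Matrix.tail_cons, sgn]
      norm_num
      module
    · intro k
      rw [Finset.sum_filter, sum_pi3]
      beta_reduce
      fin_cases k <;>
        (simp only [Matrix.cons_val_zero, Matrix.cons_val_one, Matrix.head_cons,
          Matrix.cons_val_two, Matrix.tail_cons, Fin.isValue, pauli_mvec, sgn, Epos]
         norm_num
         module)
    · intro k
      rw [Finset.sum_filter, sum_pi3]
      beta_reduce
      fin_cases k <;>
        (simp only [Matrix.cons_val_zero, Matrix.cons_val_one, Matrix.head_cons,
          Matrix.cons_val_two, Matrix.tail_cons, Fin.isValue, pauli_mvec, sgn, Eneg]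
         norm_num
         module)

end
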